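/- Let (g,ρ,V,𝒱,B₀) be a standard pentad, L = L(g,ρ,V,𝒱,B₀) the associated graded Lie algebra, and (π, U) a g-module. Let Ũ⁺ = ⊕_{m≥0} U⁺_m be the positive extension of U with respect to the pentad, an L-module. Then Ũ⁺ is irreducible as an L-module if and only if U is irreducible as a g-module. -/

import Mathlib

/-- A **standard pentad** `(g, ρ, V, 𝒱, B₀)` in the abstract-dual formulation: a Lie algebra
`g` with a non-degenerate invariant bilinear form `B`, representations `ρ` on `V` and `ϱ`
on `W` (with `W` playing the role of the `g`-submodule `𝒱 ⊆ Hom(V, k)`, realized via the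
non-degenerate pairing `pair`, so that `ϱ` is the canonical dual action), together with a
Φ-map `Φ`. -/
structure PentadStruct (k g V W : Type*) [Field k] [LieRing g] [LieAlgebra k g]
    [AddCommGroup V] [Module k V] [AddCommGroup W] [Module k W] where
  ρ : g →ₗ[k] V →ₗ[k] V
  rep_ρ : ∀ a b : g, ρ ⁅a, b⁆ = ρ a ∘ₗ ρ b - ρ b ∘ₗ ρ a
  ϱ : g →ₗ[k] W →ₗ[k] W
  rep_ϱ : ∀ a b : g, ϱ ⁅a, b⁆ = ϱ a ∘ₗ ϱ b - ϱ b ∘ₗ ϱ a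
  pair : V →ₗ[k] W →ₗ[k] k
  pair_compat : ∀ (a : g) (v : V) (w : W), pair (ρ a v) w = - pair v (ϱ a w)
  pair_nondeg_left : ∀ v : V, (∀ w : W, pair v w = 0) → v = 0
  pair_nondeg_right : ∀ w : W, (∀ v : V, pair v w = 0) → w = 0
  B : g →ₗ[k] g →ₗ[k] k
  B_nondeg_left : ∀ a : g, (∀ b : g, B a b = 0) → a = 0
  B_nondeg_right : ∀ b : g, (∀ a : g, B a b = 0) → b = 0
  B_invariant : ∀ a b c : g, B ⁅a, b⁆ c = B a ⁅b, c⁆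
  Φ : V →ₗ[k] W →ₗ[k] g
  Φ_compat : ∀ (a : g) (v : V) (w : W), B a (Φ v w) = pair (ρ a v) w

/-- The graded Lie algebra `L(g, ρ, V, 𝒱, B₀) = ⊕ₙ Vₙ` associated with a standard pentad,
characterized by its defining properties: it is ℤ-graded, its degrees `0`, `1`, `-1` are the
images of `g`, `V`, `𝒱` (compatibly with the Lie structures and the Φ-map), the higher graded
pieces satisfy `V_{i+1} = [V₁, V_i]`, `V_{-i-1} = [V₋₁, V₋ᵢ]` for `i ≥ 1`, and elements of
`Vₙ`, `|n| ≥ 2`, are by construction (as homomorphisms) determined by their brackets with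
`V_{∓1}`. -/
structure AssocGradedLieAlgebra (k g V W : Type*) [Field k] [LieRing g] [LieAlgebra k g]
    [AddCommGroup V] [Module k V] [AddCommGroup W] [Module k W]
    (P : PentadStruct k g V W) (L : Type*) [LieRing L] [LieAlgebra k L] where
  grading : ℤ → Submodule k L
  isInternal : DirectSum.IsInternal grading
  lie_mem : ∀ (n m : ℤ), ∀ x ∈ grading n, ∀ y ∈ grading m, ⁅x, y⁆ ∈ grading (n + m)
  ιg : g →ₗ[k] L
  ιV : V →ₗ[k] L
  ιW : W →ₗ[k] L
  ιg_inj : Function.Injective ιg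
  ιV_inj : Function.Injective ιV
  ιW_inj : Function.Injective ιW
  ιg_range : LinearMap.range ιg = grading 0
  ιV_range : LinearMap.range ιV = grading 1
  ιW_range : LinearMap.range ιW = grading (-1)
  ιg_lie : ∀ a b : g, ιg ⁅a, b⁆ = ⁅ιg a, ιg b⁆
  lie_ιV : ∀ (a : g) (v : V), ⁅ιg a, ιV v⁆ = ιV (P.ρ a v)
  lie_ιW : ∀ (a : g) (w : W), ⁅ιg a, ιW w⁆ = ιW (P.ϱ a w)
  lie_Φ : ∀ (v : V) (w : W), ⁅ιV v, ιW w⁆ = ιg (P.Φ v w)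
  span_pos : ∀ i : ℤ, 1 ≤ i → grading (i + 1)
    = Submodule.span k {z : L | ∃ x ∈ grading 1, ∃ y ∈ grading i, z = ⁅x, y⁆}
  span_neg : ∀ i : ℤ, 1 ≤ i → grading (-i - 1)
    = Submodule.span k {z : L | ∃ x ∈ grading (-1), ∃ y ∈ grading (-i), z = ⁅x, y⁆}
  trans_pos : ∀ n : ℤ, 2 ≤ n → ∀ x ∈ grading n, (∀ y ∈ grading (-1), ⁅x, y⁆ = 0) → x = 0
  trans_neg : ∀ n : ℤ, 2 ≤ n → ∀ x ∈ grading (-n), (∀ y ∈ grading 1, ⁅x, y⁆ = 0) → x = 0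

/-- The **positive extension** `Ũ⁺ = ⊕_{m≥0} U⁺ₘ` of the `g`-module `U⁺₀` with respect to a
standard pentad, as an `L`-module: it is positively graded, transitive, and generated by
`V₀`, `V₁` and `U⁺₀` (i.e. `U⁺_{m+1} = V₁ · U⁺ₘ`). -/
structure PositiveExtension (k g V W : Type*) [Field k] [LieRing g] [LieAlgebra k g]
    [AddCommGroup V] [Module k V] [AddCommGroup W] [Module k W]
    (P : PentadStruct k g V W) (L : Type*) [LieRing L] [LieAlgebra k L]
    (A : AssocGradedLieAlgebra k g V W P L)
    (M : Type*) [AddCommGroup M] [Module k M] [LieRingModule L M] [LieModule k L M] where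
  grading : ℤ → Submodule k M
  isInternal : DirectSum.IsInternal grading
  zero_of_neg : ∀ n : ℤ, n < 0 → grading n = ⊥
  lie_mem : ∀ (n m : ℤ), ∀ x ∈ A.grading n, ∀ u ∈ grading m, ⁅x, u⁆ ∈ grading (n + m)
  transitive : ∀ m : ℤ, 1 ≤ m → ∀ u ∈ grading m,
    (∀ y ∈ A.grading (-1), ⁅y, u⁆ = 0) → u = 0
  span_step : ∀ m : ℤ, 0 ≤ m → grading (m + 1)
    = Submodule.span k {w : M | ∃ x ∈ A.grading 1, ∃ u ∈ grading m, w = ⁅x, u⁆}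

section StatementFifteenAux

variable {k g V W L M : Type*} [Field k] [LieRing g] [LieAlgebra k g]
    [AddCommGroup V] [Module k V] [AddCommGroup W] [Module k W]
    [LieRing L] [LieAlgebra k L]
    [AddCommGroup M] [Module k M] [LieRingModule L M] [LieModule k L M]
    {P : PentadStruct k g V W} {A : AssocGradedLieAlgebra k g V W P L}

/-- The filtration `Fil t = ⨆_{n ≤ t} U⁺ₙ` of the positive extension. -/
def st15Fil (E : PositiveExtension k g V W P L A M) (t : ℤ) : Submodule k M :=
  ⨆ (n : ℤ) (_ : n ≤ t), E.grading n

variable (E : PositiveExtension k g V W P L A M)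

lemma st15_grading_le_Fil {n t : ℤ} (h : n ≤ t) : E.grading n ≤ st15Fil E t :=
  le_iSup₂_of_le n h le_rfl

lemma st15_Fil_le {t : ℤ} {Q : Submodule k M} (h : ∀ n : ℤ, n ≤ t → E.grading n ≤ Q) :
    st15Fil E t ≤ Q :=
  iSup₂_le h

lemma st15_Fil_mono {t t' : ℤ} (h : t ≤ t') : st15Fil E t ≤ st15Fil E t' :=
  st15_Fil_le E fun n hn => st15_grading_le_Fil E (hn.trans h)

lemma st15_Fil_nonpos {t : ℤ} (ht : t ≤ 0) : st15Fil E t ≤ E.grading 0 := by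
  refine st15_Fil_le E fun n hn => ?_
  rcases lt_or_eq_of_le (hn.trans ht) with h | h
  · rw [E.zero_of_neg n h]; exact bot_le
  · rw [h]

lemma st15_mem_Fil (u : M) : ∃ m : ℕ, u ∈ st15Fil E m := by
  have hu : u ∈ ⨆ n : ℤ, E.grading n := by
    rw [E.isInternal.submodule_iSup_eq_top]; trivial
  refine Submodule.iSup_induction (motive := fun v => ∃ m : ℕ, v ∈ st15Fil E m)
    E.grading hu ?_ ⟨0, zero_mem _⟩ ?_
  · intro i x hx
    exact ⟨i.toNat, st15_grading_le_Fil E (Int.self_le_toNat i) hx⟩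
  · rintro x y ⟨m, hm⟩ ⟨m', hm'⟩
    exact ⟨max m m', add_mem (st15_Fil_mono E (by exact_mod_cast le_max_left m m') hm)
      (st15_Fil_mono E (by exact_mod_cast le_max_right m m') hm')⟩

lemma st15_lie_Fil {y : L} (hy : y ∈ A.grading (-1)) {t : ℤ} {v : M}
    (hv : v ∈ st15Fil E t) : ⁅y, v⁆ ∈ st15Fil E (t - 1) := by
  have : st15Fil E t ≤ (st15Fil E (t - 1)).comap (LieModule.toEnd k L M y) := by
    refine st15_Fil_le E fun n hn => ?_
    intro w hw
    simp only [Submodule.mem_comap, LieModule.toEnd_apply_apply]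
    exact st15_grading_le_Fil E (by omega) (E.lie_mem (-1) n y hy w hw)
  simpa only [Submodule.mem_comap, LieModule.toEnd_apply_apply] using this hv

lemma st15_eq_zero_of_mem {m : ℤ} {w : M} (h1 : w ∈ E.grading m)
    (h2 : w ∈ st15Fil E (m - 1)) : w = 0 := by
  have hd : Disjoint (E.grading m) (⨆ (j : ℤ) (_ : j ≠ m), E.grading j) :=
    E.isInternal.submodule_iSupIndep m
  have hle : st15Fil E (m - 1) ≤ ⨆ (j : ℤ) (_ : j ≠ m), E.grading j :=
    st15_Fil_le E fun n hn => le_iSup₂_of_le n (by omega) le_rfl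
  exact (Submodule.disjoint_def.mp hd) w h1 (hle h2)

/-- Descent: a nonzero element of an `L`-submodule can be pushed down to a nonzero
element of degree `0`. -/
lemma st15_descent (N : Submodule k M) (hN : ∀ x : L, ∀ u ∈ N, ⁅x, u⁆ ∈ N) :
    ∀ m : ℕ, ∀ u ∈ N, u ∈ st15Fil E m → u ≠ 0 →
      ∃ v, v ∈ N ∧ v ∈ E.grading 0 ∧ v ≠ 0 := by
  intro m
  induction m with
  | zero =>
    intro u hu hF hne
    exact ⟨u, hu, st15_Fil_nonpos E (by norm_num : ((0:ℕ):ℤ) ≤ 0) hF, hne⟩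
  | succ m ih =>
    intro u hu hF hne
    have hsplit : st15Fil E ((m : ℤ) + 1) ≤ st15Fil E m ⊔ E.grading ((m : ℤ) + 1) := by
      refine st15_Fil_le E fun n hn => ?_
      rcases lt_or_eq_of_le hn with h | h
      · exact le_sup_of_le_left (st15_grading_le_Fil E (by omega))
      · rw [h]; exact le_sup_right
    have hF' : u ∈ st15Fil E ((m : ℤ) + 1) := by
      have : ((m + 1 : ℕ) : ℤ) = (m : ℤ) + 1 := by push_cast; ring
      rwa [this] at hF
    obtain ⟨v, hv, w, hw, rfl⟩ := Submodule.mem_sup.mp (hsplit hF')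
    by_cases hw0 : w = 0
    · subst hw0
      rw [add_zero] at hu hne
      exact ih v hu hv hne
    · have hex : ¬ ∀ y ∈ A.grading (-1), ⁅y, w⁆ = 0 := fun h =>
        hw0 (E.transitive ((m : ℤ) + 1) (by omega) w hw h)
      push_neg at hex
      obtain ⟨y, hy, hyw⟩ := hex
      have h1 : ⁅y, v⁆ ∈ st15Fil E ((m : ℤ) - 1) := st15_lie_Fil E hy hv
      have h2 : ⁅y, w⁆ ∈ E.grading (m : ℤ) := by
        have := E.lie_mem (-1) ((m : ℤ) + 1) y hy w hw
        have heq : (-1 : ℤ) + ((m : ℤ) + 1) = (m : ℤ) := by ring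
        rwa [heq] at this
      have hu' : ⁅y, v + w⁆ ∈ N := hN y _ hu
      have hmem : ⁅y, v + w⁆ ∈ st15Fil E m := by
        rw [lie_add]
        exact add_mem (st15_Fil_mono E (by omega) h1) (st15_grading_le_Fil E le_rfl h2)
      have hne' : ⁅y, v + w⁆ ≠ 0 := by
        intro h0
        rw [lie_add] at h0
        have hw' : ⁅y, w⁆ = -⁅y, v⁆ := by
          rw [add_comm] at h0; exact eq_neg_of_add_eq_zero_left h0
        exact hyw (st15_eq_zero_of_mem E h2 (hw' ▸ neg_mem h1))
      exact ih _ hu' hmem hne'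

lemma st15_top_le (N : Submodule k M) (hN : ∀ x : L, ∀ u ∈ N, ⁅x, u⁆ ∈ N)
    (h0 : E.grading 0 ≤ N) : N = ⊤ := by
  have hnat : ∀ m : ℕ, E.grading m ≤ N := by
    intro m
    induction m with
    | zero => simpa using h0
    | succ m ih =>
      have hstep := E.span_step m (by positivity)
      have hcast : ((m + 1 : ℕ) : ℤ) = (m : ℤ) + 1 := by push_cast; ring
      rw [hcast, hstep, Submodule.span_le]
      rintro w ⟨x, hx, u, hu, rfl⟩
      exact hN x u (ih hu)
  have hall : ∀ n : ℤ, E.grading n ≤ N := by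
    intro n
    rcases lt_or_ge n 0 with h | h
    · rw [E.zero_of_neg n h]; exact bot_le
    · have : ((n.toNat : ℕ) : ℤ) = n := Int.toNat_of_nonneg h
      rw [← this]; exact hnat n.toNat
  have : (⊤ : Submodule k M) ≤ N := by
    rw [← E.isInternal.submodule_iSup_eq_top]
    exact iSup_le hall
  exact le_antisymm le_top this

lemma st15_grading0_ne_bot (hex : ∃ u : M, u ≠ 0) : E.grading 0 ≠ ⊥ := by
  intro hbot
  have hnat : ∀ m : ℕ, E.grading m = ⊥ := by
    intro m
    induction m with
    | zero => simpa using hbot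
    | succ m ih =>
      have hstep := E.span_step m (by positivity)
      have hcast : ((m + 1 : ℕ) : ℤ) = (m : ℤ) + 1 := by push_cast; ring
      rw [hcast, hstep, ← le_bot_iff, Submodule.span_le]
      rintro w ⟨x, hx, u, hu, rfl⟩
      rw [ih] at hu
      rw [Submodule.mem_bot] at hu
      simp [hu]
  have hall : ∀ n : ℤ, E.grading n = ⊥ := by
    intro n
    rcases lt_or_ge n 0 with h | h
    · exact E.zero_of_neg n h
    · have : ((n.toNat : ℕ) : ℤ) = n := Int.toNat_of_nonneg h
      rw [← this]; exact hnat n.toNat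
  obtain ⟨u, hu⟩ := hex
  apply hu
  have : u ∈ (⊤ : Submodule k M) := trivial
  rw [← E.isInternal.submodule_iSup_eq_top] at this
  have hbot' : (⨆ n : ℤ, E.grading n) ≤ (⊥ : Submodule k M) := iSup_le fun n => (hall n).le
  simpa using hbot' this

/-- The sequence of submodules `N = N₀, N_{m+1} = span ⁅V₁, Nₘ⁆` generating the
`L`-submodule generated by `N ≤ U⁺₀`. -/
def st15Nseq (A : AssocGradedLieAlgebra k g V W P L) (N : Submodule k M) :
    ℕ → Submodule k M
  | 0 => N
  | m + 1 => Submodule.span k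
      {w : M | ∃ x ∈ A.grading 1, ∃ u ∈ st15Nseq A N m, w = ⁅x, u⁆}

variable (N : Submodule k M)

lemma st15_Nseq_le (hle : N ≤ E.grading 0) : ∀ m : ℕ, st15Nseq A N m ≤ E.grading m := by
  intro m
  induction m with
  | zero => simpa [st15Nseq] using hle
  | succ m ih =>
    rw [st15Nseq, Submodule.span_le]
    rintro w ⟨x, hx, u, hu, rfl⟩
    have := E.lie_mem 1 m x hx u (ih hu)
    have hcast : (1 : ℤ) + (m : ℤ) = ((m + 1 : ℕ) : ℤ) := by push_cast; ring
    rwa [hcast] at this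

lemma st15_Nseq_g_stable (hNg : ∀ x ∈ A.grading 0, ∀ u ∈ N, ⁅x, u⁆ ∈ N) :
    ∀ m : ℕ, ∀ x ∈ A.grading 0, ∀ u ∈ st15Nseq A N m, ⁅x, u⁆ ∈ st15Nseq A N m := by
  intro m
  induction m with
  | zero => exact hNg
  | succ m ih =>
    intro x hx u hu
    rw [st15Nseq] at hu ⊢
    refine Submodule.span_induction ?_ ?_ ?_ ?_ hu
    · rintro w ⟨x₁, hx₁, u₁, hu₁, rfl⟩
      rw [leibniz_lie]
      refine add_mem (Submodule.subset_span ⟨⁅x, x₁⁆, ?_, u₁, hu₁, rfl⟩)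
        (Submodule.subset_span ⟨x₁, hx₁, ⁅x, u₁⁆, ih x hx u₁ hu₁, rfl⟩)
      have := A.lie_mem 0 1 x hx x₁ hx₁
      norm_num at this
      exact this
    · rw [lie_zero]; exact zero_mem _
    · intro a b _ _ ha hb; rw [lie_add]; exact add_mem ha hb
    · intro t a _ ha; rw [lie_smul]; exact Submodule.smul_mem _ t ha

lemma st15_lie_neg_grading0 {y : L} (hy : y ∈ A.grading (-1)) {u : M}
    (hu : u ∈ E.grading 0) : ⁅y, u⁆ = 0 := by
  have := E.lie_mem (-1) 0 y hy u hu
  norm_num at this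
  rw [E.zero_of_neg (-1) (by norm_num)] at this
  simpa using this

lemma st15_Nseq_neg_stable (hle : N ≤ E.grading 0)
    (hNg : ∀ x ∈ A.grading 0, ∀ u ∈ N, ⁅x, u⁆ ∈ N) {y : L} (hy : y ∈ A.grading (-1)) :
    ∀ m : ℕ, ∀ u ∈ st15Nseq A N (m + 1), ⁅y, u⁆ ∈ st15Nseq A N m := by
  intro m
  induction m with
  | zero =>
    intro u hu
    rw [st15Nseq] at hu
    refine Submodule.span_induction ?_ ?_ ?_ ?_ hu
    · rintro w ⟨x₁, hx₁, u₁, hu₁, rfl⟩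
      rw [leibniz_lie]
      have hyx : ⁅y, x₁⁆ ∈ A.grading 0 := by
        have := A.lie_mem (-1) 1 y hy x₁ hx₁
        norm_num at this
        exact this
      have h1 : ⁅⁅y, x₁⁆, u₁⁆ ∈ st15Nseq A N 0 :=
        st15_Nseq_g_stable N hNg 0 _ hyx u₁ hu₁
      have h2 : ⁅y, u₁⁆ = 0 := st15_lie_neg_grading0 E hy (hle hu₁)
      rw [h2, lie_zero, add_zero]
      exact h1
    · rw [lie_zero]; exact zero_mem _
    · intro a b _ _ ha hb; rw [lie_add]; exact add_mem ha hb
    · intro t a _ ha; rw [lie_smul]; exact Submodule.smul_mem _ t ha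
  | succ m ih =>
    intro u hu
    rw [st15Nseq] at hu
    refine Submodule.span_induction ?_ ?_ ?_ ?_ hu
    · rintro w ⟨x₁, hx₁, u₁, hu₁, rfl⟩
      rw [leibniz_lie]
      have hyx : ⁅y, x₁⁆ ∈ A.grading 0 := by
        have := A.lie_mem (-1) 1 y hy x₁ hx₁
        norm_num at this
        exact this
      refine add_mem (st15_Nseq_g_stable N hNg (m + 1) _ hyx u₁ hu₁) ?_
      show _ ∈ st15Nseq A N (m + 1)
      rw [st15Nseq]
      exact Submodule.subset_span ⟨x₁, hx₁, ⁅y, u₁⁆, ih u₁ hu₁, rfl⟩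
    · rw [lie_zero]; exact zero_mem _
    · intro a b _ _ ha hb; rw [lie_add]; exact add_mem ha hb
    · intro t a _ ha; rw [lie_smul]; exact Submodule.smul_mem _ t ha

/-- The `L`-submodule generated by a `g`-stable `N ≤ U⁺₀` is `⨆ₘ Nₘ`. -/
lemma st15_Nsup_stable (hle : N ≤ E.grading 0)
    (hNg : ∀ x ∈ A.grading 0, ∀ u ∈ N, ⁅x, u⁆ ∈ N) :
    ∀ x : L, ∀ u ∈ ⨆ m : ℕ, st15Nseq A N m, ⁅x, u⁆ ∈ ⨆ m : ℕ, st15Nseq A N m := by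
  set N' : Submodule k M := ⨆ m : ℕ, st15Nseq A N m with hN'
  let S : Submodule k L :=
    { carrier := {x : L | ∀ u ∈ N', ⁅x, u⁆ ∈ N'}
      add_mem' := fun ha hb u hu => by
        rw [add_lie]; exact add_mem (ha u hu) (hb u hu)
      zero_mem' := fun u hu => by rw [zero_lie]; exact zero_mem _
      smul_mem' := fun t x hx u hu => by
        rw [smul_lie]; exact Submodule.smul_mem _ t (hx u hu) }
    -- degree 0, 1, -1 pieces lie in S
  have hS0 : A.grading 0 ≤ S := by
    intro x hx u hu
    refine Submodule.iSup_induction (motive := fun v => ⁅x, v⁆ ∈ N') _ hu ?_ ?_ ?_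
    · intro m v hv
      exact Submodule.mem_iSup_of_mem m (st15_Nseq_g_stable N hNg m x hx v hv)
    · simp only [lie_zero]; exact zero_mem _
    · intro a b ha hb; simp only [lie_add]; exact add_mem ha hb
  have hS1 : A.grading 1 ≤ S := by
    intro x hx u hu
    refine Submodule.iSup_induction (motive := fun v => ⁅x, v⁆ ∈ N') _ hu ?_ ?_ ?_
    · intro m v hv
      refine Submodule.mem_iSup_of_mem (m + 1) ?_
      rw [st15Nseq]
      exact Submodule.subset_span ⟨x, hx, v, hv, rfl⟩
    · simp only [lie_zero]; exact zero_mem _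
    · intro a b ha hb; simp only [lie_add]; exact add_mem ha hb
  have hSneg : A.grading (-1) ≤ S := by
    intro y hy u hu
    refine Submodule.iSup_induction (motive := fun v => ⁅y, v⁆ ∈ N') _ hu ?_ ?_ ?_
    · intro m v hv
      cases m with
      | zero =>
        have hv0 : v ∈ N := by simpa [st15Nseq] using hv
        rw [st15_lie_neg_grading0 E hy (hle hv0)]
        exact zero_mem _
      | succ m =>
        exact Submodule.mem_iSup_of_mem m (st15_Nseq_neg_stable E N hle hNg hy m v hv)
    · simp only [lie_zero]; exact zero_mem _
    · intro a b ha hb; simp only [lie_add]; exact add_mem ha hb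
  have hall : ∀ n : ℤ, A.grading n ≤ S := by
    intro n
    induction n using Int.induction_on with
    | zero => exact hS0
    | succ i ih =>
      rcases Nat.eq_zero_or_pos i with hi | hi
      · subst hi; simpa using hS1
      · rw [A.span_pos i (by exact_mod_cast hi), Submodule.span_le]
        rintro z ⟨x, hx, y, hy, rfl⟩
        intro u hu
        rw [lie_lie]
        exact sub_mem (hS1 hx _ (ih hy u hu)) (ih hy _ (hS1 hx u hu))
    | pred i ih =>
      rcases Nat.eq_zero_or_pos i with hi | hi
      · subst hi
        have : (-(0 : ℕ) - 1 : ℤ) = -1 := by norm_num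
        rw [this]; exact hSneg
      · rw [A.span_neg i (by exact_mod_cast hi), Submodule.span_le]
        rintro z ⟨x, hx, y, hy, rfl⟩
        intro u hu
        rw [lie_lie]
        exact sub_mem (hSneg hx _ (ih hy u hu)) (ih hy _ (hSneg hx u hu))
  intro x
  have htop : (⊤ : Submodule k L) ≤ S := by
    rw [← A.isInternal.submodule_iSup_eq_top]
    exact iSup_le hall
  exact htop trivial

/-- Projection argument: if a graded family `Q` with `Qₘ ≤ U⁺ₘ` spans everything, then
its degree-zero piece contains `U⁺₀`. -/
lemma st15_proj (Q : ℕ → Submodule k M) (hQ : ∀ m : ℕ, Q m ≤ E.grading m)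
    (htop : (⨆ m : ℕ, Q m) = ⊤) : E.grading 0 ≤ Q 0 := by
  classical
  intro u hu
  have humem : u ∈ ⨆ m : ℕ, Q m := by rw [htop]; trivial
  have hC : ∀ v : M, v ∈ ⨆ m : ℕ, Q m →
      (((LinearEquiv.ofBijective (DirectSum.coeLinearMap E.grading)
        E.isInternal).symm v) 0 : M) ∈ Q 0 := by
    intro v hv
    refine Submodule.iSup_induction
      (motive := fun v => (((LinearEquiv.ofBijective (DirectSum.coeLinearMap E.grading)
        E.isInternal).symm v) 0 : M) ∈ Q 0) Q hv ?_ ?_ ?_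
    · intro m w hw
      by_cases hm : (m : ℤ) = 0
      · have hm' : m = 0 := by exact_mod_cast hm
        subst hm'
        have hw0 : w ∈ E.grading 0 := by simpa using hQ 0 hw
        show (↑(((LinearEquiv.ofBijective (DirectSum.coeLinearMap E.grading)
          E.isInternal).symm w) 0) : M) ∈ Q 0
        rw [E.isInternal.ofBijective_coeLinearMap_of_mem hw0]
        exact hw
      · rw [E.isInternal.ofBijective_coeLinearMap_of_mem_ne hm (hQ m hw)]
        simpa using zero_mem (Q 0)
    · simp only [map_zero, DirectSum.zero_apply, ZeroMemClass.coe_zero]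
      exact zero_mem (Q 0)
    · intro a b ha hb
      simp only [map_add, DirectSum.add_apply, Submodule.coe_add]
      exact add_mem ha hb
  have := hC u humem
  rwa [E.isInternal.ofBijective_coeLinearMap_of_mem hu] at this

end StatementFifteenAux

/-- Let `(g,ρ,V,𝒱,B₀)` be a standard pentad, `L = L(g,ρ,V,𝒱,B₀)`, and
`(π, U)` a `g`-module with positive extension `Ũ⁺ = ⊕_{m≥0} U⁺ₘ` (an `L`-module, with
`U⁺₀ = U`).  Then `Ũ⁺` is irreducible as an `L`-module if and only if `U` is irreducible as a
`g`-module. -/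
theorem statement15
    {k g V W L M : Type*} [Field k] [LieRing g] [LieAlgebra k g]
    [AddCommGroup V] [Module k V] [AddCommGroup W] [Module k W]
    [LieRing L] [LieAlgebra k L]
    [AddCommGroup M] [Module k M] [LieRingModule L M] [LieModule k L M]
    (P : PentadStruct k g V W)
    (A : AssocGradedLieAlgebra k g V W P L)
    (E : PositiveExtension k g V W P L A M) :
    -- `Ũ⁺` is an irreducible `L`-module
    ((∃ u : M, u ≠ 0) ∧
      ∀ N : Submodule k M, (∀ x : L, ∀ u ∈ N, ⁅x, u⁆ ∈ N) → N = ⊥ ∨ N = ⊤)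
    ↔
    -- if and only if `U = U⁺₀` is an irreducible `g`-module (`g` acting through `ιg : g → L`)
    (E.grading 0 ≠ ⊥ ∧
      ∀ N : Submodule k M, N ≤ E.grading 0 → (∀ a : g, ∀ u ∈ N, ⁅A.ιg a, u⁆ ∈ N) →
        N = ⊥ ∨ N = E.grading 0) := by

  constructor
  · rintro ⟨hex, hirr⟩
    refine ⟨st15_grading0_ne_bot E hex, ?_⟩
    intro N hle hNg'
    by_cases hNbot : N = ⊥
    · exact Or.inl hNbot
    right
    have hNg : ∀ x ∈ A.grading 0, ∀ u ∈ N, ⁅x, u⁆ ∈ N := by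
      intro x hx u hu
      rw [← A.ιg_range] at hx
      obtain ⟨a, rfl⟩ := hx
      exact hNg' a u hu
    have h00 : st15Nseq A N 0 = N := rfl
    rcases hirr (⨆ m : ℕ, st15Nseq A N m) (st15_Nsup_stable E N hle hNg) with h | h
    · exfalso
      apply hNbot
      have hle' : N ≤ ⨆ m : ℕ, st15Nseq A N m := h00 ▸ le_iSup (st15Nseq A N) 0
      rw [h] at hle'
      exact le_bot_iff.mp hle'
    · have hproj := st15_proj E (st15Nseq A N) (st15_Nseq_le E N hle) h
      rw [h00] at hproj
      exact le_antisymm hle hproj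
  · rintro ⟨hne, hirr⟩
    constructor
    · obtain ⟨u, _, hune⟩ := (Submodule.ne_bot_iff _).mp hne
      exact ⟨u, hune⟩
    · intro N hN
      by_cases hb : N = ⊥
      · exact Or.inl hb
      right
      obtain ⟨u, huN, hune⟩ := (Submodule.ne_bot_iff N).mp hb
      obtain ⟨m, hFm⟩ := st15_mem_Fil E u
      obtain ⟨v, hvN, hv0, hvne⟩ := st15_descent E N hN m u huN hFm hune
      have hstab : ∀ a : g, ∀ w ∈ N ⊓ E.grading 0, ⁅A.ιg a, w⁆ ∈ N ⊓ E.grading 0 := by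
        intro a w hw
        refine ⟨hN _ _ hw.1, ?_⟩
        have hag : A.ιg a ∈ A.grading 0 := by
          rw [← A.ιg_range]; exact ⟨a, rfl⟩
        have := E.lie_mem 0 0 _ hag w hw.2
        norm_num at this
        exact this
      have hN0 : (N ⊓ E.grading 0) = E.grading 0 := by
        rcases hirr (N ⊓ E.grading 0) inf_le_right hstab with h | h
        · exfalso
          apply hvne
          have : v ∈ (⊥ : Submodule k M) := h ▸ (⟨hvN, hv0⟩ : v ∈ N ⊓ E.grading 0)
          simpa using this
        · exact h
      have h0le : E.grading 0 ≤ N := by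
        rw [← hN0]; exact inf_le_left
      exact st15_top_le E N hN h0le
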